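/- Let k be a field and X a type; in F := FreeLieAlgebra k (X ⊕ X), with plain generators x̄ and dotted generators ẋ, let φ : F → F be the unique Lie algebra homomorphism with φ(x̄) = x̄ and φ(ẋ) = x̄, and let V be the Lie ideal of F generated by {ẋ : x ∈ X}. Let S be a subset of V, and let J be the smallest k-submodule of F containing S such that for all j ∈ J and v ∈ V one has ⁅φ(v), j⁆ ∈ J, ⁅j, φ(v)⁆ ∈ J, ⁅v, φ(j)⁆ ∈ J, ⁅φ(j), v⁆ ∈ J, ⁅v, j⁆ ∈ J, and ⁅j, v⁆ ∈ J. Then J equals the intersection (as submodules of F) of V with the Lie ideal of F generated by the set S ∪ φ(S). -/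

import Mathlib

open FreeLieAlgebra

/-- For a subset `S` of the free Lie tri-algebra `V` (the Lie ideal of
`FreeLieAlgebra k (X ⊕ X)` generated by the dotted generators), the tri-algebra ideal of `V`
generated by `S` equals `V ∩ (S ∪ φ(S))`, the intersection of `V` with the Lie ideal of the
ambient free Lie algebra generated by `S ∪ φ(S)`. -/
theorem trialgebra_ideal_eq_inter (k : Type*) [Field k] (X : Type*)
    (φ : FreeLieAlgebra k (X ⊕ X) →ₗ⁅k⁆ FreeLieAlgebra k (X ⊕ X))
    (hφl : ∀ x : X, φ (FreeLieAlgebra.of k (Sum.inl x)) = FreeLieAlgebra.of k (Sum.inl x))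
    (hφr : ∀ x : X, φ (FreeLieAlgebra.of k (Sum.inr x)) = FreeLieAlgebra.of k (Sum.inl x))
    (V : LieIdeal k (FreeLieAlgebra k (X ⊕ X)))
    (hV : V = LieSubmodule.lieSpan k (FreeLieAlgebra k (X ⊕ X))
        (Set.range fun x : X => FreeLieAlgebra.of k (Sum.inr x)))
    (S : Set (FreeLieAlgebra k (X ⊕ X))) (hS : S ⊆ (V : Set (FreeLieAlgebra k (X ⊕ X)))) :
    sInf {J : Submodule k (FreeLieAlgebra k (X ⊕ X)) |
        S ⊆ (J : Set (FreeLieAlgebra k (X ⊕ X))) ∧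
        ∀ j ∈ J, ∀ v ∈ V, ⁅φ v, j⁆ ∈ J ∧ ⁅j, φ v⁆ ∈ J ∧ ⁅v, φ j⁆ ∈ J ∧
          ⁅φ j, v⁆ ∈ J ∧ ⁅v, j⁆ ∈ J ∧ ⁅j, v⁆ ∈ J} =
      LieSubmodule.toSubmodule V ⊓
        LieSubmodule.toSubmodule
          (LieSubmodule.lieSpan k (FreeLieAlgebra k (X ⊕ X)) (S ∪ φ '' S)) := by
  classical
  -- the quotient map as a Lie algebra morphism
  let q : FreeLieAlgebra k (X ⊕ X) →ₗ⁅k⁆ FreeLieAlgebra k (X ⊕ X) ⧸ V :=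
    { toLinearMap := (LieSubmodule.toSubmodule V).mkQ
      map_lie' := fun {x y} => rfl }
  have hq0 : ∀ m : FreeLieAlgebra k (X ⊕ X), q m = 0 ↔ m ∈ V := fun m =>
    Submodule.Quotient.mk_eq_zero _
  -- the two auxiliary endomorphisms
  let π : FreeLieAlgebra k (X ⊕ X) →ₗ⁅k⁆ FreeLieAlgebra k (X ⊕ X) :=
    FreeLieAlgebra.lift k (Sum.elim (fun x : X => of k (Sum.inl x)) fun _ => 0)
  let θ : FreeLieAlgebra k (X ⊕ X) →ₗ⁅k⁆ FreeLieAlgebra k (X ⊕ X) :=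
    FreeLieAlgebra.lift k (Sum.elim (fun x : X => of k (Sum.inr x)) fun _ => 0)
  have hπl : ∀ x : X, π (of k (Sum.inl x)) = of k (Sum.inl x) := fun x =>
    FreeLieAlgebra.lift_of_apply _ _
  have hπr : ∀ x : X, π (of k (Sum.inr x)) = 0 := fun x =>
    FreeLieAlgebra.lift_of_apply _ _
  have hθl : ∀ x : X, θ (of k (Sum.inl x)) = of k (Sum.inr x) := fun x =>
    FreeLieAlgebra.lift_of_apply _ _
  have hθr : ∀ x : X, θ (of k (Sum.inr x)) = 0 := fun x =>
    FreeLieAlgebra.lift_of_apply _ _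
  have hdot : ∀ x : X, of k (Sum.inr x) ∈ V := fun x => by
    rw [hV]; exact LieSubmodule.subset_lieSpan ⟨x, rfl⟩
  have hφφ : ∀ f, φ (φ f) = φ f := by
    have h : φ.comp φ = φ := FreeLieAlgebra.hom_ext fun z => by
      cases z with
      | inl x => simp [LieHom.comp_apply, hφl]
      | inr x => simp [LieHom.comp_apply, hφr, hφl]
    intro f; exact DFunLike.congr_fun h f
  have hφθ : ∀ f, φ (θ f) = π f := by
    have h : φ.comp θ = π := FreeLieAlgebra.hom_ext fun z => by
      cases z with
      | inl x => simp [LieHom.comp_apply, hθl, hφr, hπl]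
      | inr x => simp [LieHom.comp_apply, hθr, hπr, map_zero]
    intro f; exact DFunLike.congr_fun h f
  have hπφ : ∀ f, π (φ f) = φ f := by
    have h : π.comp φ = φ := FreeLieAlgebra.hom_ext fun z => by
      cases z with
      | inl x => simp [LieHom.comp_apply, hφl, hπl]
      | inr x => simp [LieHom.comp_apply, hφr, hπl]
    intro f; exact DFunLike.congr_fun h f
  have hθV : ∀ f, θ f ∈ V := by
    have h : q.comp θ = 0 := FreeLieAlgebra.hom_ext fun z => by
      cases z with
      | inl x =>
          have h1 : q (θ (of k (Sum.inl x))) = 0 := by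
            rw [hθl]; exact (hq0 _).2 (hdot x)
          simpa [LieHom.comp_apply, LieHom.zero_apply] using h1
      | inr x =>
          have h1 : q (θ (of k (Sum.inr x))) = 0 := by
            rw [hθr]; exact q.map_zero
          simpa [LieHom.comp_apply, LieHom.zero_apply] using h1
    intro f
    have h1 : q (θ f) = 0 := DFunLike.congr_fun h f
    exact (hq0 _).1 h1
  have hπV : ∀ f, f - π f ∈ V := by
    have h : q.comp π = q := FreeLieAlgebra.hom_ext fun z => by
      cases z with
      | inl x => simp [LieHom.comp_apply, hπl]
      | inr x =>
          have h1 : q (π (of k (Sum.inr x))) = 0 := by rw [hπr]; exact q.map_zero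
          have h2 : q (of k (Sum.inr x)) = 0 := (hq0 _).2 (hdot x)
          simp [LieHom.comp_apply, h1, h2]
    intro f
    have h1 : q (π f) = q f := DFunLike.congr_fun h f
    exact (hq0 _).1 (by rw [map_sub, h1, sub_self])
  have hπV0 : ∀ v ∈ V, π v = 0 := by
    intro v hv
    have hle : V ≤ π.ker := by
      rw [hV]
      refine LieSubmodule.lieSpan_le.mpr ?_
      rintro _ ⟨x, rfl⟩
      simpa [LieHom.mem_ker] using hπr x
    exact LieHom.mem_ker.mp (hle hv)
  set I : LieIdeal k (FreeLieAlgebra k (X ⊕ X)) :=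
    LieSubmodule.lieSpan k (FreeLieAlgebra k (X ⊕ X)) (S ∪ φ '' S) with hI
  have hSI : ∀ s ∈ S, s ∈ I := fun s hs => LieSubmodule.subset_lieSpan (Or.inl hs)
  have hφI : ∀ f ∈ I, φ f ∈ I := by
    have hle : I ≤ LieIdeal.comap φ I := by
      rw [hI]
      refine LieSubmodule.lieSpan_le.mpr ?_
      rintro s (hs | ⟨t, ht, rfl⟩)
      · show φ s ∈ I
        exact LieSubmodule.subset_lieSpan (Or.inr ⟨s, hs, rfl⟩)
      · show φ (φ t) ∈ I
        rw [hφφ]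
        exact LieSubmodule.subset_lieSpan (Or.inr ⟨t, ht, rfl⟩)
    intro f hf
    exact hle hf
  apply le_antisymm
  · -- sInf ≤ V ⊓ I
    refine sInf_le ⟨?_, ?_⟩
    · intro s hs
      exact Submodule.mem_inf.2 ⟨(LieSubmodule.mem_toSubmodule _).2 (hS hs),
        (LieSubmodule.mem_toSubmodule _).2 (hSI s hs)⟩
    · intro j hj v hv
      rw [Submodule.mem_inf, LieSubmodule.mem_toSubmodule, LieSubmodule.mem_toSubmodule] at hj
      obtain ⟨hjV, hjI⟩ := hj
      have memVI : ∀ w : FreeLieAlgebra k (X ⊕ X), w ∈ V → w ∈ I →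
          w ∈ LieSubmodule.toSubmodule V ⊓ LieSubmodule.toSubmodule I := fun w h1 h2 =>
        Submodule.mem_inf.2 ⟨(LieSubmodule.mem_toSubmodule _).2 h1,
          (LieSubmodule.mem_toSubmodule _).2 h2⟩
      refine ⟨memVI _ (V.lie_mem hjV) (I.lie_mem hjI), ?_, ?_, ?_,
        memVI _ (V.lie_mem hjV) (I.lie_mem hjI), ?_⟩
      · rw [← lie_skew]
        exact neg_mem (memVI _ (V.lie_mem hjV) (I.lie_mem hjI))
      · refine memVI _ ?_ (I.lie_mem (hφI j hjI))
        rw [← lie_skew]; exact neg_mem (V.lie_mem hv)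
      · refine memVI _ (V.lie_mem hv) ?_
        rw [← lie_skew]; exact neg_mem (I.lie_mem (hφI j hjI))
      · rw [← lie_skew]
        exact neg_mem (memVI _ (V.lie_mem hjV) (I.lie_mem hjI))
  · -- V ⊓ I ≤ sInf
    set J : Submodule k (FreeLieAlgebra k (X ⊕ X)) :=
      sInf {J : Submodule k (FreeLieAlgebra k (X ⊕ X)) |
        S ⊆ (J : Set (FreeLieAlgebra k (X ⊕ X))) ∧
        ∀ j ∈ J, ∀ v ∈ V, ⁅φ v, j⁆ ∈ J ∧ ⁅j, φ v⁆ ∈ J ∧ ⁅v, φ j⁆ ∈ J ∧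
          ⁅φ j, v⁆ ∈ J ∧ ⁅v, j⁆ ∈ J ∧ ⁅j, v⁆ ∈ J} with hJ
    have hSJ : S ⊆ (J : Set (FreeLieAlgebra k (X ⊕ X))) := fun s hs =>
      Submodule.mem_sInf.2 fun p hp => hp.1 hs
    have hJclose : ∀ j ∈ J, ∀ v ∈ V, ⁅φ v, j⁆ ∈ J ∧ ⁅j, φ v⁆ ∈ J ∧ ⁅v, φ j⁆ ∈ J ∧
        ⁅φ j, v⁆ ∈ J ∧ ⁅v, j⁆ ∈ J ∧ ⁅j, v⁆ ∈ J := by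
      intro j hj v hv
      refine ⟨?_, ?_, ?_, ?_, ?_, ?_⟩ <;>
        · refine Submodule.mem_sInf.2 fun p hp => ?_
          have := hp.2 j (Submodule.mem_sInf.1 hj p hp) v hv
          tauto
    have hJV : J ≤ LieSubmodule.toSubmodule V := by
      refine sInf_le ⟨?_, ?_⟩
      · intro s hs; exact (LieSubmodule.mem_toSubmodule _).2 (hS hs)
      · intro j hj v hv
        rw [LieSubmodule.mem_toSubmodule] at hj
        refine ⟨(LieSubmodule.mem_toSubmodule _).2 (V.lie_mem hj), ?_, ?_, ?_,
          (LieSubmodule.mem_toSubmodule _).2 (V.lie_mem hj), ?_⟩ <;>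
          rw [LieSubmodule.mem_toSubmodule]
        · rw [← lie_skew]; exact neg_mem (V.lie_mem hj)
        · rw [← lie_skew]; exact neg_mem (V.lie_mem hv)
        · exact V.lie_mem hv
        · rw [← lie_skew]; exact neg_mem (V.lie_mem hj)
    -- the submodule J + φ(J) is a Lie ideal
    set Msub : Submodule k (FreeLieAlgebra k (X ⊕ X)) :=
      J ⊔ Submodule.map (φ : FreeLieAlgebra k (X ⊕ X) →ₗ[k] FreeLieAlgebra k (X ⊕ X)) J with hM
    have key : ∀ f m : FreeLieAlgebra k (X ⊕ X), m ∈ Msub → ⁅f, m⁆ ∈ Msub := by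
      intro f m hm
      obtain ⟨a, ha, b, hb, rfl⟩ := Submodule.mem_sup.1 hm
      obtain ⟨j', hj', rfl⟩ := hb
      have hfd : f = π f + (f - π f) := by abel
      have h1 : ⁅f, a⁆ ∈ J := by
        rw [hfd, add_lie]
        refine add_mem ?_ ((hJclose a ha (f - π f) (hπV f)).2.2.2.2.1)
        rw [← hφθ]
        exact (hJclose a ha (θ f) (hθV f)).1
      have h2 : ⁅f, φ j'⁆ ∈ Msub := by
        rw [hfd, add_lie]
        refine add_mem ?_ (Submodule.mem_sup_left
          ((hJclose j' hj' (f - π f) (hπV f)).2.2.1))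
        rw [← hφθ, ← LieHom.map_lie]
        exact Submodule.mem_sup_right ⟨_, (hJclose j' hj' (θ f) (hθV f)).2.2.2.2.1, rfl⟩
      rw [lie_add]
      exact add_mem (Submodule.mem_sup_left h1) h2
    let M : LieIdeal k (FreeLieAlgebra k (X ⊕ X)) :=
      { Msub with lie_mem := fun {x m} hm => key x m hm }
    have hMsub : ∀ w : FreeLieAlgebra k (X ⊕ X), w ∈ M ↔ w ∈ Msub := fun w => Iff.rfl
    have hIM : I ≤ M := by
      rw [hI]
      refine LieSubmodule.lieSpan_le.mpr ?_
      rintro s (hs | ⟨t, ht, rfl⟩)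
      · exact Submodule.mem_sup_left (hSJ hs)
      · exact Submodule.mem_sup_right ⟨t, hSJ ht, rfl⟩
    intro x hx
    rw [Submodule.mem_inf, LieSubmodule.mem_toSubmodule, LieSubmodule.mem_toSubmodule] at hx
    have hxM : x ∈ Msub := (hMsub x).1 (hIM hx.2)
    obtain ⟨a, ha, b, hb, hab⟩ := Submodule.mem_sup.1 hxM
    obtain ⟨j', hj', rfl⟩ := hb
    rw [LieHom.coe_toLinearMap] at hab
    have haV : a ∈ V := (LieSubmodule.mem_toSubmodule _).1 (hJV ha)
    have hbV : φ j' ∈ V := by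
      have h1 : φ j' = x - a := by rw [← hab]; abel
      rw [h1]
      exact V.sub_mem hx.1 haV
    have hb0 : φ j' = 0 := by
      have h1 := hπV0 _ hbV
      rwa [hπφ] at h1
    rw [← hab, hb0, add_zero]
    exact ha
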